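/- For any vectors x, v ∈ ℝⁿ with xᵀB v = 0, one has |xᵀA v| ≤ √(κ_ν − 1)·‖v‖_A·‖x‖_A, where κ_ν = ν_max/ν_min. (In particular the cosine of the leading angle ϑ(B,ρ*;f) is at most √(κ_ν − 1).) -/

import Mathlib

open Matrix

private lemma dot_symm {n : ℕ} (A : Matrix (Fin n) (Fin n) ℝ) (hA : A.IsHermitian)
    (y z : Fin n → ℝ) : y ⬝ᵥ A *ᵥ z = z ⬝ᵥ A *ᵥ y := by
  rw [dotProduct_mulVec, ← mulVec_transpose, show Aᵀ = A from hA, dotProduct_comm]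

/-- The cosine of the leading angle is bounded by √(κ_ν − 1). -/
theorem statement_8 {n : ℕ}
    (A B : Matrix (Fin n) (Fin n) ℝ)
    (hA : A.PosDef) (hB : B.PosDef)
    (νmin νmax : ℝ) (hνmin : 0 < νmin) (hνmax : 0 < νmax)
    (hν : ∀ z, νmin * (z ⬝ᵥ B *ᵥ z) ≤ z ⬝ᵥ A *ᵥ z ∧ z ⬝ᵥ A *ᵥ z ≤ νmax * (z ⬝ᵥ B *ᵥ z))
    (x v : Fin n → ℝ) (hxv : x ⬝ᵥ B *ᵥ v = 0) :
    |x ⬝ᵥ A *ᵥ v| ≤ Real.sqrt (νmax / νmin - 1) *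
      Real.sqrt (v ⬝ᵥ A *ᵥ v) * Real.sqrt (x ⬝ᵥ A *ᵥ x) := by
  -- trivial case n = 0
  rcases Nat.eq_zero_or_pos n with hn | hn
  · subst hn
    have h0 : x ⬝ᵥ A *ᵥ v = 0 := by
      simp [dotProduct]
    rw [h0, abs_zero]
    positivity
  -- n > 0 : there is a nonzero vector, so νmin ≤ νmax
  have hzB : ∀ z : Fin n → ℝ, 0 ≤ z ⬝ᵥ B *ᵥ z := fun z => by
    rcases eq_or_ne z 0 with rfl | hz
    · simp
    · have := hB.dotProduct_mulVec_pos hz; simpa using this.le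
  have hzA : ∀ z : Fin n → ℝ, 0 ≤ z ⬝ᵥ A *ᵥ z := fun z => by
    rcases eq_or_ne z 0 with rfl | hz
    · simp
    · have := hA.dotProduct_mulVec_pos hz; simpa using this.le
  have hle : νmin ≤ νmax := by
    obtain ⟨i⟩ := Fin.pos_iff_nonempty.mp hn
    set z : Fin n → ℝ := Pi.single i 1 with hzdef
    have hz : z ≠ 0 := by
      intro h
      have := congrFun h i
      simp [hzdef] at this
    have hBz : 0 < z ⬝ᵥ B *ᵥ z := by have := hB.dotProduct_mulVec_pos hz; simpa using this
    have h1 := (hν z).1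
    have h2 := (hν z).2
    nlinarith
  set c : ℝ := νmin / νmax with hc
  have hc0 : 0 < c := div_pos hνmin hνmax
  have hc1 : c ≤ 1 := (div_le_one hνmax).mpr hle
  set avv := v ⬝ᵥ A *ᵥ v with havv
  set axx := x ⬝ᵥ A *ᵥ x with haxx
  set axv := x ⬝ᵥ A *ᵥ v with haxv
  have hvx : v ⬝ᵥ B *ᵥ x = 0 := by rw [dot_symm B hB.isHermitian]; exact hxv
  have havx : v ⬝ᵥ A *ᵥ x = axv := dot_symm A hA.isHermitian v x
  -- quadratic nonneg in t
  have key : ∀ t : ℝ, 0 ≤ ((1 - c) * avv) * (t * t) + (-(2 * axv)) * t + (1 - c) * axx := by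
    intro t
    set w : Fin n → ℝ := x - t • v with hw
    have hexp : w ⬝ᵥ A *ᵥ w = axx - 2 * t * axv + t * t * avv := by
      simp only [hw, sub_dotProduct, dotProduct_sub, mulVec_sub, mulVec_smul,
        smul_dotProduct, dotProduct_smul, smul_eq_mul, havx, ← haxx, ← haxv, ← havv]
      ring
    have hexpB : w ⬝ᵥ B *ᵥ w = x ⬝ᵥ B *ᵥ x + t * t * (v ⬝ᵥ B *ᵥ v) := by
      simp only [hw, sub_dotProduct, dotProduct_sub, mulVec_sub, mulVec_smul,
        smul_dotProduct, dotProduct_smul, smul_eq_mul, hxv, hvx]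
      ring
    have h1 := (hν w).1
    have h2x := (hν x).2
    have h2v := (hν v).2
    have hAw := hzA w
    -- νmin * (xBx + t² vBv) ≤ wAw ; xBx ≥ axx/νmax ; vBv ≥ avv/νmax
    rw [hexp] at h1 hAw
    rw [hexpB] at h1
    have hxB : axx ≤ νmax * (x ⬝ᵥ B *ᵥ x) := h2x
    have hvB : avv ≤ νmax * (v ⬝ᵥ B *ᵥ v) := h2v
    have hBvv := hzB v
    have hBxx := hzB x
    have ht2 : 0 ≤ t * t := mul_self_nonneg t
    have hcm : c * νmax = νmin := by rw [hc]; field_simp [hνmax.ne'] <;> ring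
    nlinarith [mul_le_mul_of_nonneg_left hvB (le_of_lt hc0),
      mul_le_mul_of_nonneg_left hxB (le_of_lt hc0),
      mul_nonneg ht2 hBvv]
  have hdisc := discrim_le_zero key
  rw [discrim] at hdisc
  -- axv² ≤ (1-c)² avv axx
  have hsq : axv ^ 2 ≤ (1 - c) ^ 2 * (avv * axx) := by nlinarith
  have hAvv := hzA v
  have hAxx := hzA x
  -- (1-c)² ≤ νmax/νmin - 1 = (1-c)/c
  have hκ : (1 - c) ^ 2 ≤ νmax / νmin - 1 := by
    have : νmax / νmin - 1 = (1 - c) / c := by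
      rw [hc]; field_simp [hνmin.ne', hνmax.ne'] <;> ring
    rw [this]
    rw [le_div_iff₀ hc0]
    nlinarith
  have hsq2 : axv ^ 2 ≤ (νmax / νmin - 1) * (avv * axx) := by
    calc axv ^ 2 ≤ (1 - c) ^ 2 * (avv * axx) := hsq
      _ ≤ (νmax / νmin - 1) * (avv * axx) :=
          mul_le_mul_of_nonneg_right hκ (mul_nonneg hAvv hAxx)
  have habs : |axv| = Real.sqrt (axv ^ 2) := (Real.sqrt_sq_eq_abs axv).symm
  rw [habs]
  calc Real.sqrt (axv ^ 2) ≤ Real.sqrt ((νmax / νmin - 1) * (avv * axx)) :=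
        Real.sqrt_le_sqrt hsq2
    _ = Real.sqrt (νmax / νmin - 1) * Real.sqrt avv * Real.sqrt axx := by
        rw [Real.sqrt_mul (by nlinarith : (0:ℝ) ≤ νmax / νmin - 1),
          Real.sqrt_mul hAvv, mul_assoc]
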